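/- Let (A, {μ_k}) be an A∞-algebra and (M, {η_k}) a representation of it. Then the graded vector space A ⊕ M carries a Diass∞-algebra structure with operations π_k(y; (a₁,u₁), …, (a_k,u_k)) = (μ_k(a₁,…,a_k), η_k(a₁,…,a_{i−1}, u_i, a_{i+1},…,a_k)) for y ∈ Y_k written uniquely as the grafting y = y₁ ∨ y₂ with y₁ an (i−1)-tree; i.e. these π_k satisfy the higher diassociative identities. -/
import Mathlib


/-- Planar binary trees; a tree with `n` internal (trivalent) vertices has `n+1`
leaves and represents an element of `Yₙ`. -/
inductive PBTree : Type
  | leaf : PBTree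
  | node : PBTree → PBTree → PBTree

namespace PBTree

/-- The number of internal vertices of a planar binary tree. -/
def vert : PBTree → ℕ
  | leaf => 0
  | node l r => l.vert + r.vert + 1

/-- The `i`-th face map `dᵢ : Yₙ → Yₙ₋₁`, removing the `i`-th leaf
(leaves are labelled `0, 1, …, n` from left to right). -/
def face : ℕ → PBTree → PBTree
  | _, leaf => leaf
  | _, node leaf leaf => leaf
  | i, node leaf (node a b) =>
      if i = 0 then node a b else node leaf (face (i - 1) (node a b))
  | i, node (node a b) leaf =>
      if i ≤ (node a b).vert then node (face i (node a b)) leaf else node a b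
  | i, node (node a b) (node c d) =>
      if i ≤ (node a b).vert then node (face i (node a b)) (node c d)
      else node (node a b) (face (i - (node a b).vert - 1) (node c d))

/-- `dcomp i c = dᵢ ∘ dᵢ₊₁ ∘ ⋯ ∘ dᵢ₊c₋₁`, a composite of `c` face maps. -/
def dcomp (i : ℕ) : ℕ → PBTree → PBTree
  | 0, t => t
  | c + 1, t => dcomp i c (face (i + c) t)

/-- The map `R₀^{k;i,l} : Y_{k+l-1} → Y_k`, `R₀ = dᵢ ∘ ⋯ ∘ d_{i+l-2}`
(here `i` is the 1-based position). -/
def R0 (i l : ℕ) (y : PBTree) : PBTree := dcomp i (l - 1) y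

/-- The map `Rᵢ^{k;i,l} : Y_{k+l-1} → Y_l`,
`Rᵢ = d₀ ∘ ⋯ ∘ d_{i-2} ∘ d_{i+l} ∘ ⋯ ∘ d_{k+l-1}`. -/
def Ri (k i l : ℕ) (y : PBTree) : PBTree := dcomp 0 (i - 1) (dcomp (i + l) (k - i) y)

/-- The position attached to the grafting decomposition `y = y₁ ∨ y₂`:
the number of vertices of the left subtree (0-based position of the `M`-input). -/
def pos : PBTree → ℕ
  | leaf => 0
  | node l _ => l.vert

end PBTree


namespace PBTree

lemma vert_face : ∀ (t : PBTree) (i : ℕ), i ≤ t.vert → (face i t).vert = t.vert - 1 := by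
  intro t
  induction t with
  | leaf => intro i hi; simp [vert] at hi; subst hi; rfl
  | node l r ihl ihr =>
    cases l with
    | leaf =>
      cases r with
      | leaf => intro i _; simp [face, vert]
      | node a b =>
        intro i hi
        simp only [vert] at hi
        by_cases h : i = 0
        · simp [face, h, vert]
        · have h1 : i - 1 ≤ (node a b).vert := by simp only [vert]; omega
          have := ihr (i - 1) h1
          simp only [face, if_neg h]
          simp only [vert] at this ⊢
          omega
    | node a b =>
      cases r with
      | leaf =>
        intro i hi
        simp only [vert] at hi
        by_cases h : i ≤ (node a b).vert
        · have := ihl i h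
          simp only [face, if_pos h]
          simp only [vert] at this h ⊢
          omega
        · simp only [face, if_neg h]
          simp only [vert] at h ⊢
          omega
      | node c d =>
        intro i hi
        simp only [vert] at hi
        by_cases h : i ≤ (node a b).vert
        · have := ihl i h
          simp only [face, if_pos h]
          simp only [vert] at this h ⊢
          omega
        · have h1 : i - (node a b).vert - 1 ≤ (node c d).vert := by
            simp only [vert] at h ⊢; omega
          have := ihr _ h1
          simp only [face, if_neg h]
          simp only [vert] at this h ⊢
          omega

lemma pos_face_gt (t : PBTree) (i : ℕ) (h1 : t.pos + 1 < i) (h2 : i ≤ t.vert) :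
    (face i t).pos = t.pos := by
  cases t with
  | leaf => simp [vert] at h2; omega
  | node l r =>
    cases l with
    | leaf =>
      cases r with
      | leaf => simp [vert, pos] at h1 h2 ⊢; omega
      | node a b =>
        have h : ¬ i = 0 := by simp [pos] at h1; omega
        simp only [face, if_neg h, pos]
    | node a b =>
      cases r with
      | leaf =>
        simp only [pos, vert] at h1 h2
        omega
      | node c d =>
        have h : ¬ i ≤ (node a b).vert := by simp only [pos] at h1; omega
        simp only [face, if_neg h, pos]

lemma pos_face_succ (t : PBTree) (i : ℕ) (h1 : i = t.pos + 1) (h2 : i < t.vert) :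
    (face i t).pos = t.pos := by
  cases t with
  | leaf => simp [vert] at h2
  | node l r =>
    cases l with
    | leaf =>
      cases r with
      | leaf => simp [vert, pos] at h1 h2 ⊢; omega
      | node a b =>
        have h : ¬ i = 0 := by simp [pos] at h1; omega
        simp only [face, if_neg h, pos]
    | node a b =>
      cases r with
      | leaf =>
        simp only [pos, vert] at h1 h2
        omega
      | node c d =>
        have h : ¬ i ≤ (node a b).vert := by simp only [pos] at h1; omega
        simp only [face, if_neg h, pos]

lemma pos_face_le (t : PBTree) (i : ℕ) (h1 : 1 ≤ t.pos) (h2 : i ≤ t.pos) :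
    (face i t).pos = t.pos - 1 := by
  cases t with
  | leaf => simp [pos] at h1
  | node l r =>
    cases l with
    | leaf => simp [pos, vert] at h1
    | node a b =>
      simp only [pos] at h1 h2 ⊢
      cases r with
      | leaf =>
        simp only [face, if_pos h2, pos]
        exact vert_face _ i h2
      | node c d =>
        simp only [face, if_pos h2, pos]
        exact vert_face _ i h2

lemma pos_dcomp_gt : ∀ (c i : ℕ) (t : PBTree), t.pos + 1 < i → i + c ≤ t.vert + 1 →
    (dcomp i c t).pos = t.pos := by
  intro c
  induction c with
  | zero => intro i t _ _; simp [dcomp]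
  | succ c ih =>
    intro i t h1 h2
    have hf : i + c ≤ t.vert := by omega
    have hp := pos_face_gt t (i + c) (by omega) hf
    have hv := vert_face t (i + c) hf
    simp only [dcomp]
    rw [ih i _ (by omega) (by omega), hp]

lemma pos_dcomp_le : ∀ (c i : ℕ) (t : PBTree), i + c ≤ t.pos →
    (dcomp i c t).pos = t.pos - c := by
  intro c
  induction c with
  | zero => intro i t _; simp [dcomp]
  | succ c ih =>
    intro i t h
    have hp := pos_face_le t (i + c) (by omega) (by omega)
    simp only [dcomp]
    rw [ih i _ (by omega), hp]
    omega

lemma pos_dcomp_mid : ∀ (c p : ℕ) (t : PBTree), p ≤ t.pos → t.pos ≤ p + c →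
    p + c + 1 ≤ t.vert → (dcomp (p + 1) c t).pos = p := by
  intro c
  induction c with
  | zero => intro p t h1 h2 _; simp [dcomp]; omega
  | succ c ih =>
    intro p t h1 h2 h3
    have hidx : p + 1 + c ≤ t.vert := by omega
    have hv := vert_face t (p + 1 + c) hidx
    simp only [dcomp]
    rcases Nat.lt_or_ge t.pos (p + c) with hc | hc
    · have hp := pos_face_gt t (p + 1 + c) (by omega) hidx
      exact ih p _ (by omega) (by omega) (by omega)
    · rcases Nat.eq_or_lt_of_le hc with hc' | hc'
      · have hp := pos_face_succ t (p + 1 + c) (by omega) (by omega)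
        exact ih p _ (by omega) (by omega) (by omega)
      · have hp := pos_face_le t (p + 1 + c) (by omega) (by omega)
        exact ih p _ (by omega) (by omega) (by omega)

lemma pos_R0_lt {n p l : ℕ} (y : PBTree) (hy : y.vert = n) (hl : 1 ≤ l) (hpl : p + l ≤ n)
    (hq : y.pos < p) : (R0 (p + 1) l y).pos = y.pos :=
  pos_dcomp_gt _ _ _ (by omega) (by omega)

lemma pos_R0_mid {n p l : ℕ} (y : PBTree) (hy : y.vert = n) (hl : 1 ≤ l) (hpl : p + l ≤ n)
    (hq1 : p ≤ y.pos) (hq2 : y.pos < p + l) : (R0 (p + 1) l y).pos = p :=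
  pos_dcomp_mid _ _ _ hq1 (by omega) (by omega)

lemma pos_R0_ge {n p l : ℕ} (y : PBTree) (hy : y.vert = n) (hl : 1 ≤ l) (hpl : p + l ≤ n)
    (hq : p + l ≤ y.pos) : (R0 (p + 1) l y).pos = y.pos - l + 1 := by
  unfold R0
  rw [pos_dcomp_le _ _ _ (by omega)]
  omega

lemma pos_Ri_mid {n p l : ℕ} (y : PBTree) (hy : y.vert = n) (hl : 1 ≤ l) (hpl : p + l ≤ n)
    (hq1 : p ≤ y.pos) (hq2 : y.pos < p + l) : (Ri (n - l + 1) (p + 1) l y).pos = y.pos - p := by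
  unfold Ri
  have h1 : (dcomp (p + 1 + l) (n - l + 1 - (p + 1)) y).pos = y.pos :=
    pos_dcomp_gt _ _ _ (by omega) (by omega)
  have h2 : p + 1 - 1 = p := by omega
  rw [h2, pos_dcomp_le _ _ _ (by rw [h1]; omega), h1]

end PBTree

/-- The structure maps `π_k` of the `Diass∞`-algebra `A ⊕ M` built from an
`A∞`-structure `μ` and a representation structure `η`:
`π_k(y; (a₁,u₁),…,(a_k,u_k)) = (μ_k(a₁,…,a_k), η_k(a₁,…,u_i,…,a_k))` where
`y = y₁ ∨ y₂` with `y₁` an `(i−1)`-tree. Arguments are given as sequences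
`ℕ → A × M` (only the first `k` entries are relevant); `η k p a u` has its
`M`-input `u` at 0-based position `p`, the value `a p` being irrelevant. -/
def diassOp {A M : Type*} [AddCommGroup A] [AddCommGroup M]
    (μ : ℕ → (ℕ → A) → A) (η : ℕ → ℕ → (ℕ → A) → M → M)
    (k : ℕ) (y : PBTree) (x : ℕ → A × M) : A × M :=
  (μ k (fun j => (x j).1), η k y.pos (fun j => (x j).1) ((x y.pos).2))

/-- Let `(A, {μ_k})` be an `A∞`-algebra and `(M, {η_k})` a
representation of it (with gradings `GA`, `GM`; all structure maps have degree 1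
and satisfy the higher (representation) associativity identities with Koszul
signs). Then the graded vector space `A ⊕ M` carries a `Diass∞`-algebra
structure with operations `π_k(y; (a₁,u₁),…) = (μ_k(a₁,…), η_k(a₁,…,u_i,…))`,
`i` determined by the grafting decomposition `y = y₁ ∨ y₂` with `y₁` an
`(i−1)`-tree: the `π_k` satisfy the higher diassociative identities. -/
theorem aInfinityRep_gives_diassInfinity
    (A M : Type*) [AddCommGroup A] [AddCommGroup M]
    (GA : ℤ → AddSubgroup A) (GM : ℤ → AddSubgroup M)
    (μ : ℕ → (ℕ → A) → A) (η : ℕ → ℕ → (ℕ → A) → M → M)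
    -- `μ_k` (resp. `η_k`) depends only on its `k` (relevant) inputs
    (hμext : ∀ (k : ℕ) (a a' : ℕ → A), (∀ j < k, a j = a' j) → μ k a = μ k a')
    (hηext : ∀ (k p : ℕ) (a a' : ℕ → A) (u : M),
      (∀ j < k, j ≠ p → a j = a' j) → η k p a u = η k p a' u)
    -- the structure maps have degree 1
    (hμdeg : ∀ (k : ℕ) (d : ℕ → ℤ) (a : ℕ → A),
      (∀ j < k, a j ∈ GA (d j)) →
      μ k a ∈ GA ((∑ j ∈ Finset.range k, d j) + 1))
    (hηdeg : ∀ (k p : ℕ) (d : ℕ → ℤ) (a : ℕ → A) (u : M), p < k →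
      (∀ j < k, j ≠ p → a j ∈ GA (d j)) → u ∈ GM (d p) →
      η k p a u ∈ GM ((∑ j ∈ Finset.range k, d j) + 1))
    -- the higher associativity identities of the `A∞`-algebra `(A, {μ_k})`
    (hAinf : ∀ n, 1 ≤ n → ∀ (d : ℕ → ℤ) (a : ℕ → A),
      (∀ j < n, a j ∈ GA (d j)) →
      ∑ l ∈ Finset.Icc 1 n, ∑ p ∈ Finset.range (n - l + 1),
        (((-1 : ℤˣ) ^ (∑ j ∈ Finset.range p, d j) : ℤˣ) : ℤ) •
          μ (n - l + 1) (fun j =>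
            if j < p then a j
            else if j = p then μ l (fun t => a (t + p))
            else a (j + l - 1)) = 0)
    -- the representation identities for `(M, {η_k})`: the higher associativity
    -- identities with exactly one input (at position `q`) taken from `M`
    (hRep : ∀ n, 1 ≤ n → ∀ q < n, ∀ (d : ℕ → ℤ) (a : ℕ → A) (u : M),
      (∀ j < n, j ≠ q → a j ∈ GA (d j)) → u ∈ GM (d q) →
      ∑ l ∈ Finset.Icc 1 n, ∑ p ∈ Finset.range (n - l + 1),
        (((-1 : ℤˣ) ^ (∑ j ∈ Finset.range p, d j) : ℤˣ) : ℤ) •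
          (if q < p then
            η (n - l + 1) q (fun j =>
              if j < p then a j
              else if j = p then μ l (fun t => a (t + p))
              else a (j + l - 1)) u
          else if q < p + l then
            η (n - l + 1) p (fun j => if j < p then a j else a (j + l - 1))
              (η l (q - p) (fun t => a (t + p)) u)
          else
            η (n - l + 1) (q - l + 1) (fun j =>
              if j < p then a j
              else if j = p then μ l (fun t => a (t + p))
              else a (j + l - 1)) u) = 0) :
    -- conclusion: the `π_k` satisfy the higher diassociative identities
    ∀ n, 1 ≤ n → ∀ y : PBTree, y.vert = n →
      ∀ (d : ℕ → ℤ) (x : ℕ → A × M),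
        (∀ j < n, (x j).1 ∈ GA (d j) ∧ (x j).2 ∈ GM (d j)) →
        ∑ l ∈ Finset.Icc 1 n, ∑ p ∈ Finset.range (n - l + 1),
          (((-1 : ℤˣ) ^ (∑ j ∈ Finset.range p, d j) : ℤˣ) : ℤ) •
            diassOp μ η (n - l + 1) (PBTree.R0 (p + 1) l y) (fun j =>
              if j < p then x j
              else if j = p then
                diassOp μ η l (PBTree.Ri (n - l + 1) (p + 1) l y) (fun t => x (t + p))
              else x (j + l - 1)) = 0 := by
  intro n hn y hy d x hx
  have hqn : y.pos < n := by
    cases y with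
    | leaf => simp [PBTree.vert] at hy; omega
    | node l r =>
      simp only [PBTree.vert] at hy
      simp only [PBTree.pos]
      omega
  have hA := hAinf n hn d (fun j => (x j).1) (fun j hj => (hx j hj).1)
  have hR := hRep n hn y.pos hqn d (fun j => (x j).1) ((x y.pos).2)
      (fun j hj _ => (hx j hj).1) (hx y.pos hqn).2
  rw [Prod.ext_iff]
  constructor
  · simp only [Prod.fst_sum, Prod.smul_fst, Prod.fst_zero]
    refine Eq.trans ?_ hA
    refine Finset.sum_congr rfl fun l hl => Finset.sum_congr rfl fun p hp => ?_
    congr 1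
    simp only [diassOp]
    congr 1
    funext j
    by_cases h1 : j < p
    · simp [h1]
    · by_cases h2 : j = p
      · simp [h1, h2, diassOp]
      · simp [h1, h2]
  · simp only [Prod.snd_sum, Prod.smul_snd, Prod.snd_zero]
    refine Eq.trans ?_ hR
    refine Finset.sum_congr rfl fun l hl => Finset.sum_congr rfl fun p hp => ?_
    rw [Finset.mem_Icc] at hl
    rw [Finset.mem_range] at hp
    have hpl : p + l ≤ n := by omega
    congr 1
    simp only [diassOp]
    by_cases hc1 : y.pos < p
    · rw [PBTree.pos_R0_lt y hy hl.1 hpl hc1]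
      simp only [if_pos hc1]
      apply hηext
      intro j hj hne
      by_cases hlt : j < p
      · simp [hlt]
      · by_cases heq : j = p
        · simp [hlt, heq]
        · simp [hlt, heq]
    · by_cases hc2 : y.pos < p + l
      · have h1 := PBTree.pos_R0_mid y hy hl.1 hpl (by omega) hc2
        have h2 := PBTree.pos_Ri_mid y hy hl.1 hpl (by omega) hc2
        rw [h1]
        simp only [if_neg hc1, if_pos hc2]
        rw [h2, show y.pos - p + p = y.pos from by omega]
        split_ifs with hs1
        · exact absurd hs1 (lt_irrefl p)
        · apply hηext
          intro j hj hne
          by_cases hlt : j < p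
          · simp [hlt]
          · simp [hlt, hne]
      · have h1 := PBTree.pos_R0_ge y hy hl.1 hpl (by omega)
        rw [h1]
        simp only [if_neg hc1, if_neg hc2]
        have hb1 : ¬ (y.pos - l + 1 < p) := by omega
        have hb2 : ¬ (y.pos - l + 1 = p) := by omega
        simp only [if_neg hb1, if_neg hb2]
        rw [show y.pos - l + 1 + l - 1 = y.pos from by omega]
        apply hηext
        intro j hj hne
        by_cases hlt : j < p
        · simp [hlt]
        · by_cases heq : j = p
          · simp [hlt, heq]
          · simp [hlt, heq]
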